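/- If I ⊆ R = K[x_0,...,x_n] is a saturated strongly stable ideal whose quotient has constant Hilbert polynomial p_{R/I} = c, then some power of x_{n−1} lies in I; equivalently, the double saturation sat_{x_{n−1},x_n}(I) equals the unit ideal (1) = R. -/

import Mathlib

open MvPolynomial
open Fin.NatCast

noncomputable section

/-- The polynomial ring `K[x_0,…,x_n]` in `n+1` variables. -/
abbrev PR (K : Type*) [Field K] (n : ℕ) := MvPolynomial (Fin (n+1)) K

variable {K : Type*} [Field K] {n : ℕ}

/-- The monomial `x^A`. -/
def mon (A : Fin (n+1) →₀ ℕ) : PR K n := monomial A 1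

/-- Total degree of the monomial with exponent vector `A`. -/
def mdeg (A : Fin (n+1) →₀ ℕ) : ℕ := ∑ i, A i

/-- The largest index of a variable dividing `x^A` (0 if `A = 0`). -/
def maxIdx (A : Fin (n+1) →₀ ℕ) : Fin (n+1) := WithBot.unbotD 0 (A.support.max)

/-- The exponent vector of `(x_i / x_j) · x^A`. -/
def shiftM (A : Fin (n+1) →₀ ℕ) (i j : Fin (n+1)) : Fin (n+1) →₀ ℕ :=
  A + Finsupp.single i 1 - Finsupp.single j 1

/-- `I` is a monomial ideal: generated by a set of monomials. -/
def IsMonomialIdeal (I : Ideal (PR K n)) : Prop :=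
  ∃ S : Set (Fin (n+1) →₀ ℕ), I = Ideal.span ((fun A => (mon A : PR K n)) '' S)

/-- Strongly stable monomial ideal. -/
def StronglyStable (I : Ideal (PR K n)) : Prop :=
  ∀ A : Fin (n+1) →₀ ℕ, mon A ∈ I → ∀ i j : Fin (n+1), A j ≠ 0 → i < j →
    mon (shiftM A i j) ∈ I

/-- Stable monomial ideal. -/
def Stable (I : Ideal (PR K n)) : Prop :=
  ∀ A : Fin (n+1) →₀ ℕ, A ≠ 0 → mon A ∈ I → ∀ i : Fin (n+1), i < maxIdx A →
    mon (shiftM A i (maxIdx A)) ∈ I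

/-- `x^A` is a minimal monomial generator of `I`. -/
def MinGen (I : Ideal (PR K n)) (A : Fin (n+1) →₀ ℕ) : Prop :=
  mon A ∈ I ∧ ∀ B : Fin (n+1) →₀ ℕ, B ≤ A → B ≠ A → mon B ∉ I

/-- The set of exponent vectors of minimal monomial generators of `I`. -/
def Gens (I : Ideal (PR K n)) : Set (Fin (n+1) →₀ ℕ) := {A | MinGen I A}

/-- The irrelevant maximal ideal `(x_0,…,x_n)`. -/
def irrIdeal (K : Type*) [Field K] (n : ℕ) : Ideal (PR K n) :=
  Ideal.span (Set.range fun i : Fin (n+1) => (X i : PR K n))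

/-- `I` is saturated: `(I : (x_0,…,x_n)) = I`. -/
def Saturated (I : Ideal (PR K n)) : Prop :=
  Submodule.colon I (irrIdeal K n) = I

/-- The saturation `∪ₖ (I : (x_0,…,x_n)^k)`. -/
def saturationOf (I : Ideal (PR K n)) : Ideal (PR K n) :=
  ⨆ k : ℕ, Submodule.colon I ((irrIdeal K n) ^ k : Ideal (PR K n))

/-- The Hilbert function of `R/I`: `j ↦ dim_K [R/I]_j`. -/
def hilbF {σ : Type*} (I : Ideal (MvPolynomial σ K)) (j : ℕ) : ℕ :=
  Module.finrank K
    ((homogeneousSubmodule σ K j).map (Ideal.Quotient.mkₐ K I).toLinearMap)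

/-- `p` is the Hilbert polynomial of `R/I`. -/
def IsHilbPoly {σ : Type*} (I : Ideal (MvPolynomial σ K)) (p : Polynomial ℚ) : Prop :=
  ∃ N : ℕ, ∀ j : ℕ, N ≤ j → p.eval (j : ℚ) = (hilbF I j : ℚ)

/-- The binomial-coefficient polynomial `C(q, k) = q(q-1)⋯(q-k+1)/k!`. -/
def choosePoly (q : Polynomial ℚ) (k : ℕ) : Polynomial ℚ :=
  ((k.factorial : ℚ))⁻¹ • ∏ j ∈ Finset.range k, (q - Polynomial.C (j : ℚ))

/-- The canonical representation `p(z) = Σ_{i=0}^d [C(z+i,i+1) − C(z+i−b_i,i+1)]`. -/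
def canonicalHP (d : ℕ) (b : ℕ → ℕ) : Polynomial ℚ :=
  ∑ i ∈ Finset.range (d+1),
    (choosePoly (Polynomial.X + Polynomial.C (i : ℚ)) (i+1)
      - choosePoly (Polynomial.X + Polynomial.C (i : ℚ) - Polynomial.C (b i : ℚ)) (i+1))

/-- `x^A >_lex x^B`. -/
def LexGt (A B : Fin (n+1) →₀ ℕ) : Prop :=
  ∃ i : Fin (n+1), (∀ j : Fin (n+1), j < i → A j = B j) ∧ B i < A i

/-- `I` is a lexsegment ideal. -/
def IsLexsegment (I : Ideal (PR K n)) : Prop :=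
  IsMonomialIdeal I ∧ ∀ A B : Fin (n+1) →₀ ℕ, mdeg A = mdeg B → mon B ∈ I →
    LexGt A B → mon A ∈ I

/-- `I` is a homogeneous ideal. -/
def Homog (I : Ideal (PR K n)) : Prop :=
  ∀ f ∈ I, ∀ j : ℕ, homogeneousComponent j f ∈ I

/-- The set of right-shifts of `x^A`. -/
def rightShifts (A : Fin (n+1) →₀ ℕ) : Set (Fin (n+1) →₀ ℕ) :=
  {B | ∃ i : Fin (n+1), (i : ℕ) + 2 ≤ n ∧ A i ≠ 0 ∧
    B = shiftM A ((((i : ℕ) + 1 : ℕ)) : Fin (n+1)) i}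

/-- The set of left-shifts of `x^A`. -/
def leftShifts (A : Fin (n+1) →₀ ℕ) : Set (Fin (n+1) →₀ ℕ) :=
  {B | ∃ i : Fin (n+1), 1 ≤ (i : ℕ) ∧ (i : ℕ) + 1 ≤ n ∧ A i ≠ 0 ∧
    B = shiftM A ((((i : ℕ) - 1 : ℕ)) : Fin (n+1)) i}

/-- The monomials `x^A x_r, …, x^A x_{n-1}` with `r = max(x^A)`. -/
def expSet (A : Fin (n+1) →₀ ℕ) : Set (Fin (n+1) →₀ ℕ) :=
  {B | ∃ j : Fin (n+1), ((maxIdx A : ℕ)) ≤ (j : ℕ) ∧ (j : ℕ) + 1 ≤ n ∧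
    B = A + Finsupp.single j 1}

/-- `x^A ≠ 1` is expandable in `I`. -/
def Expandable (I : Ideal (PR K n)) (A : Fin (n+1) →₀ ℕ) : Prop :=
  A ≠ 0 ∧ MinGen I A ∧ ∀ B ∈ rightShifts A, ¬ MinGen I B

/-- `x^A ≠ 1` is contractible in `I`. -/
def Contractible (I : Ideal (PR K n)) (A : Fin (n+1) →₀ ℕ) : Prop :=
  A ≠ 0 ∧ mon A ∉ I ∧ MinGen I (A + Finsupp.single (((n - 1 : ℕ)) : Fin (n+1)) 1) ∧
    ∀ B ∈ leftShifts A, mon B ∈ I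

/-- The expansion of `x^A` in `I`. -/
def expansionIdeal (I : Ideal (PR K n)) (A : Fin (n+1) →₀ ℕ) : Ideal (PR K n) :=
  Ideal.span ((fun B => (mon B : PR K n)) '' ((Gens I \ {A}) ∪ expSet A))

/-- The contraction of `x^A` in `I`. -/
def contractionIdeal (I : Ideal (PR K n)) (A : Fin (n+1) →₀ ℕ) : Ideal (PR K n) :=
  Ideal.span ((fun B => (mon B : PR K n)) '' ((Gens I ∪ {A}) \ expSet A))

/-- Setting `x_{n-1} = x_n = 1` in the exponent vector `A`. -/
def stripLastTwo (A : Fin (n+1) →₀ ℕ) : Fin (n+1) →₀ ℕ :=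
  Finsupp.update (Finsupp.update A (((n : ℕ)) : Fin (n+1)) 0) (((n - 1 : ℕ)) : Fin (n+1)) 0

/-- The double saturation `sat_{x_{n-1},x_n}(I)` (as an ideal of `R`). -/
def doubleSat (I : Ideal (PR K n)) : Ideal (PR K n) :=
  Ideal.span ((fun A => (mon (stripLastTwo A) : PR K n)) '' Gens I)

/-- Restriction of an exponent vector to the first `n` variables. -/
def restrictExp (A : Fin (n+1) →₀ ℕ) : Fin n →₀ ℕ :=
  Finsupp.comapDomain Fin.castSucc A (Fin.castSucc_injective n).injOn

/-- The ideal `I · R^{(1)}` in `K[x_0,…,x_{n-1}]` (for saturated monomial `I`). -/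
def restrictIdeal (I : Ideal (PR K n)) : Ideal (MvPolynomial (Fin n) K) :=
  Ideal.span ((fun A => (monomial (restrictExp A) (1 : K) : MvPolynomial (Fin n) K)) '' Gens I)

/-- Lex order on exponent vectors in `n` variables. -/
def LexGt' (A B : Fin n →₀ ℕ) : Prop :=
  ∃ i : Fin n, (∀ j : Fin n, j < i → A j = B j) ∧ B i < A i

/-- Monomial ideal in `K[x_0,…,x_{n-1}]`. -/
def IsMonomialIdeal' (I : Ideal (MvPolynomial (Fin n) K)) : Prop :=
  ∃ S : Set (Fin n →₀ ℕ),
    I = Ideal.span ((fun A => (monomial A (1 : K) : MvPolynomial (Fin n) K)) '' S)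

/-- Lexsegment ideal in `K[x_0,…,x_{n-1}]`. -/
def IsLexsegment' (I : Ideal (MvPolynomial (Fin n) K)) : Prop :=
  IsMonomialIdeal' I ∧ ∀ A B : Fin n →₀ ℕ, (∑ i, A i) = (∑ i, B i) →
    monomial B (1 : K) ∈ I → LexGt' A B → monomial A (1 : K) ∈ I

/-- `I` is almost lexsegment: saturated strongly stable with `I·R^{(1)}` lexsegment. -/
def AlmostLex (I : Ideal (PR K n)) : Prop :=
  IsMonomialIdeal I ∧ StronglyStable I ∧ Saturated I ∧ IsLexsegment' (restrictIdeal I)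

/-- A graded free resolution of the ideal `I`, with `rank i` the rank of the `i`-th
free module and `twist i k` the degrees of the standard basis elements. -/
structure GradedFreeRes (I : Ideal (PR K n)) where
  rank : ℕ → ℕ
  twist : (i : ℕ) → Fin (rank i) → ℕ
  diff : (i : ℕ) → ((Fin (rank (i+1)) → PR K n) →ₗ[PR K n] (Fin (rank i) → PR K n))
  aug : (Fin (rank 0) → PR K n) →ₗ[PR K n] PR K n
  aug_range : LinearMap.range aug = I
  aug_graded : ∀ k, aug (Pi.single k 1) ∈ homogeneousSubmodule (Fin (n+1)) K (twist 0 k)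
  diff_graded : ∀ i k l, diff i (Pi.single k 1) l = 0 ∨
    (twist i l ≤ twist (i+1) k ∧
      diff i (Pi.single k 1) l ∈ homogeneousSubmodule (Fin (n+1)) K (twist (i+1) k - twist i l))
  exact_aug : LinearMap.range (diff 0) = LinearMap.ker aug
  exact_diff : ∀ i, LinearMap.range (diff (i+1)) = LinearMap.ker (diff i)

/-- A resolution is minimal if all differential entries lie in the irrelevant ideal. -/
def MinimalRes {I : Ideal (PR K n)} (F : GradedFreeRes I) : Prop :=
  ∀ i k l, constantCoeff (F.diff i (Pi.single k 1) l) = 0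

end

section AuxProof

open MvPolynomial

variable {K : Type*} [Field K] {n : ℕ}

lemma mon_mem_iff {I : Ideal (PR K n)} {S : Set (Fin (n+1) →₀ ℕ)}
    (hI : I = Ideal.span ((fun A => (mon A : PR K n)) '' S)) (A : Fin (n+1) →₀ ℕ) :
    mon A ∈ I ↔ ∃ s ∈ S, s ≤ A := by
  have himg : (fun A => (mon A : PR K n)) '' S = (fun s => monomial s (1 : K)) '' S := rfl
  rw [hI, himg, mem_ideal_span_monomial_image]
  constructor
  · intro h
    refine h A ?_
    classical
    simp [mon, support_monomial]
  · rintro ⟨s, hs, hsa⟩ xi hxi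
    classical
    have hxA : xi = A := by simpa [mon, support_monomial] using hxi
    exact ⟨s, hs, hxA ▸ hsa⟩

lemma mem_of_support {I : Ideal (PR K n)} {S : Set (Fin (n+1) →₀ ℕ)}
    (hI : I = Ideal.span ((fun A => (mon A : PR K n)) '' S)) {f : PR K n}
    (hf : f ∈ I) {d : Fin (n+1) →₀ ℕ} (hd : d ∈ f.support) : mon d ∈ I := by
  have himg : (fun A => (mon A : PR K n)) '' S = (fun s => monomial s (1 : K)) '' S := rfl
  rw [hI, himg, mem_ideal_span_monomial_image] at hf
  obtain ⟨s, hs, hsle⟩ := hf d hd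
  exact (mon_mem_iff hI d).2 ⟨s, hs, hsle⟩

lemma shift_eq {e1 e2 : Fin (n+1)} (a b : ℕ) :
    shiftM (Finsupp.single e1 a + Finsupp.single e2 (b+1)) e1 e2
      = Finsupp.single e1 (a+1) + Finsupp.single e2 b := by
  have h : Finsupp.single e1 a + Finsupp.single e2 (b+1) + Finsupp.single e1 1
      = Finsupp.single e1 (a+1) + Finsupp.single e2 b + Finsupp.single e2 1 := by
    rw [Finsupp.single_add, Finsupp.single_add]
    abel
  rw [shiftM, h, add_tsub_cancel_right]

lemma pow_move {I : Ideal (PR K n)} (hss : StronglyStable I)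
    {e1 e2 : Fin (n+1)} (hlt : e1 < e2) :
    ∀ b a : ℕ, mon (Finsupp.single e1 a + Finsupp.single e2 b) ∈ I →
      mon (Finsupp.single e1 (a + b)) ∈ I := by
  have hne : e1 ≠ e2 := ne_of_lt hlt
  intro b
  induction b with
  | zero => intro a h; simpa using h
  | succ b ih =>
    intro a h
    have hA : (Finsupp.single e1 a + Finsupp.single e2 (b+1)) e2 ≠ 0 := by
      classical
      simp [Finsupp.single_apply, hne]
    have h2 := hss _ h e1 e2 hA hlt
    rw [shift_eq] at h2
    have h3 := ih (a+1) h2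
    have he : a + 1 + b = a + (b + 1) := by omega
    rwa [he] at h3

lemma update_zero_of_eq_zero (f : Fin (n+1) →₀ ℕ) (a : Fin (n+1)) (h : f a = 0) :
    f.update a 0 = f := by rw [← h, Finsupp.update_self]

end AuxProof

/-- if a saturated strongly stable ideal has constant Hilbert polynomial
`c`, then some (positive) power of `x_{n-1}` lies in `I`; equivalently the double
saturation of `I` is the unit ideal. -/
theorem constant_hilbPoly_power_of_xnm1_mem
    {K : Type*} [Field K] {n : ℕ} (hn : 2 ≤ n) (I : Ideal (PR K n))
    (hmono : IsMonomialIdeal I) (hss : StronglyStable I) (hsat : Saturated I)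
    (c : ℕ) (hp : IsHilbPoly I (Polynomial.C (c : ℚ))) :
    (∃ k : ℕ, 0 < k ∧
      mon (Finsupp.single (((n - 1 : ℕ)) : Fin (n+1)) k) ∈ I) ∧
    doubleSat I = ⊤ := by
  classical
  obtain ⟨S, hI⟩ := hmono
  set e1 : Fin (n+1) := (((n - 1 : ℕ)) : Fin (n+1)) with he1
  set e2 : Fin (n+1) := ((n : ℕ) : Fin (n+1)) with he2
  have hv1 : (e1 : ℕ) = n - 1 := by
    rw [he1, Fin.val_natCast]; exact Nat.mod_eq_of_lt (by omega)
  have hv2 : (e2 : ℕ) = n := by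
    rw [he2, Fin.val_natCast]; exact Nat.mod_eq_of_lt (by omega)
  have hlt : e1 < e2 := by rw [Fin.lt_def, hv1, hv2]; omega
  have hne : e1 ≠ e2 := ne_of_lt hlt
  -- Part 1
  have key : ∃ k : ℕ, 0 < k ∧ mon (Finsupp.single e1 k) ∈ I := by
    by_contra hcon
    push_neg at hcon
    have h1I : (1 : PR K n) ∉ I := by
      intro h1
      have hIT : I = ⊤ := (Ideal.eq_top_iff_one I).mpr h1
      exact hcon 1 one_pos (by rw [hIT]; trivial)
    obtain ⟨N, hN⟩ := hp
    set j : ℕ := max N (c + 1) with hj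
    have hjN : N ≤ j := le_max_left _ _
    have hjc : c + 1 ≤ j := le_max_right _ _
    set E : Fin (j+1) → (Fin (n+1) →₀ ℕ) :=
      fun a => Finsupp.single e1 (a : ℕ) + Finsupp.single e2 (j - (a : ℕ)) with hE
    have hEapply : ∀ a : Fin (j+1), E a e1 = (a : ℕ) := by
      intro a
      simp [hE, Finsupp.single_apply, hne, Ne.symm hne]
    have hEinj : Function.Injective E := by
      intro a b hab
      have h := congrArg (fun f : Fin (n+1) →₀ ℕ => f e1) hab
      simp only [hEapply] at h
      exact Fin.ext h
    have hdeg : ∀ d : Fin (n+1) →₀ ℕ, d.degree = ∑ i, d i := by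
      intro d
      exact Finset.sum_subset (Finset.subset_univ _)
        (by intro i _ hi; simpa using hi)
    have hEdeg : ∀ a : Fin (j+1), (mon (E a) : PR K n) ∈
        homogeneousSubmodule (Fin (n+1)) K j := by
      intro a
      rw [mem_homogeneousSubmodule, mon]
      apply isHomogeneous_monomial
      rw [hdeg]
      have ha : (a : ℕ) ≤ j := by omega
      simp only [hE, Finsupp.add_apply, Finset.sum_add_distrib]
      have h1 : (∑ i, Finsupp.single e1 (a : ℕ) i) = (a : ℕ) := by
        simp only [Finsupp.single_apply, Finset.sum_ite_eq, Finset.mem_univ, if_true]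
      have h2 : (∑ i, Finsupp.single e2 (j - (a : ℕ)) i) = j - (a : ℕ) := by
        simp only [Finsupp.single_apply, Finset.sum_ite_eq, Finset.mem_univ, if_true]
      rw [h1, h2]; omega
    have hEout : ∀ a : Fin (j+1), mon (E a) ∉ I := by
      intro a hmem
      have h2 := pow_move hss hlt (j - (a : ℕ)) (a : ℕ) hmem
      have hj' : (a : ℕ) + (j - (a : ℕ)) = j := by omega
      rw [hj'] at h2
      exact hcon j (by omega) h2
    set W := (homogeneousSubmodule (Fin (n+1)) K j).map
      (Ideal.Quotient.mkₐ K I).toLinearMap with hW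
    have hfinhom : FiniteDimensional K (homogeneousSubmodule (Fin (n+1)) K j) :=
      Submodule.finiteDimensional_of_le (S₂ := restrictTotalDegree (Fin (n+1)) K j)
        (fun p hp => by
          rw [mem_restrictTotalDegree]
          exact hp.totalDegree_le)
    have hWfin : Module.Finite K W := Module.Finite.map _ _
    set v : Fin (j+1) → W := fun a =>
      ⟨Ideal.Quotient.mkₐ K I (mon (E a)),
        Submodule.mem_map_of_mem (hEdeg a)⟩ with hv
    have hvind : LinearIndependent K v := by
      apply LinearIndependent.of_comp W.subtype
      rw [Fintype.linearIndependent_iff]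
      intro g hg a
      by_contra hga
      have hsum : (∑ i, g i • mon (E i) : PR K n) ∈ I := by
        rw [← Ideal.Quotient.eq_zero_iff_mem]
        have : (Ideal.Quotient.mkₐ K I) (∑ i, g i • mon (E i)) = 0 := by
          rw [map_sum]
          simpa [hv] using hg
        rwa [Ideal.Quotient.mkₐ_eq_mk] at this
      have hcoeff : (∑ i, g i • (mon (E i) : PR K n)).coeff (E a) = g a := by
        rw [coeff_sum]
        have hterm : ∀ i : Fin (j+1),
            (g i • (mon (E i) : PR K n)).coeff (E a)
              = if i = a then g i else 0 := by
          intro i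
          rw [coeff_smul, mon, coeff_monomial]
          by_cases h : i = a
          · subst h; simp
          · have : E i ≠ E a := fun hEq => h (hEinj hEq)
            simp [this, h]
        simp only [hterm]
        simp
      have hsupp : E a ∈ (∑ i, g i • (mon (E i) : PR K n)).support :=
        mem_support_iff.2 (by rw [hcoeff]; exact hga)
      exact hEout a (mem_of_support hI hsum hsupp)
    have hcard := hvind.fintype_card_le_finrank
    have hlow : j + 1 ≤ hilbF I j := by
      simpa [hilbF, Fintype.card_fin] using hcard
    have hc := hN j hjN
    rw [Polynomial.eval_C] at hc
    have hceq : (c : ℚ) = (hilbF I j : ℚ) := hc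
    have : c = hilbF I j := by exact_mod_cast hceq
    omega
  refine ⟨key, ?_⟩
  -- Part 2
  obtain ⟨k0, hk0pos, hk0⟩ := key
  have stripK : ∀ k : ℕ, stripLastTwo (Finsupp.single e1 k) = 0 := by
    intro k
    have hinner : Finsupp.update (Finsupp.single e1 k) e2 0 = Finsupp.single e1 k :=
      update_zero_of_eq_zero _ _ (by simp [Finsupp.single_apply, hne])
    rw [stripLastTwo, ← he1, ← he2, hinner, Finsupp.update_eq_erase_add_single,
      Finsupp.erase_single]
    simp
  have hGen : ∃ A ∈ Gens I, stripLastTwo A = 0 := by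
    by_cases h1 : (1 : PR K n) ∈ I
    · refine ⟨0, ⟨?_, ?_⟩, by simpa using stripK 0⟩
      · have : (mon 0 : PR K n) = 1 := by simp [mon]
        rw [this]; exact h1
      · intro B hB hBne
        exact absurd (le_antisymm hB (zero_le : (0 : Fin (n+1) →₀ ℕ) ≤ B)) hBne
    · have hex : ∃ k : ℕ, mon (Finsupp.single e1 k) ∈ I := ⟨k0, hk0⟩
      set k := Nat.find hex with hkdef
      have hkI : mon (Finsupp.single e1 k) ∈ I := Nat.find_spec hex
      have hkne : k ≠ 0 := by
        intro h
        apply h1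
        rw [h] at hkI
        simpa [mon] using hkI
      refine ⟨Finsupp.single e1 k, ⟨hkI, ?_⟩, stripK k⟩
      intro B hB hBne hBI
      have hBle : ∀ i, B i ≤ Finsupp.single e1 k i := Finsupp.le_def.1 hB
      have hBform : B = Finsupp.single e1 (B e1) := by
        ext i
        by_cases hi : e1 = i
        · subst hi; simp
        · have := hBle i
          simp only [Finsupp.single_apply, if_neg hi] at this ⊢
          omega
      have hBlt : B e1 < k := by
        have h1' : B e1 ≤ k := by
          have := hBle e1
          rwa [Finsupp.single_eq_same] at this
        rcases lt_or_eq_of_le h1' with h | h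
        · exact h
        · exact absurd (by rw [hBform, h]) hBne
      exact Nat.find_min hex hBlt (hBform ▸ hBI)
  obtain ⟨A, hA, hstrip⟩ := hGen
  rw [Ideal.eq_top_iff_one, doubleSat]
  apply Ideal.subset_span
  refine ⟨A, hA, ?_⟩
  show mon (stripLastTwo A) = 1
  rw [hstrip]
  simp [mon]
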